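/- Let G be a graph and x an optimal feasible solution to the vertex cover LP with values in {0, 1/2, 1}. Let V_1 = {v : x_v = 1} and V_0 = {v : x_v = 0}. If V_0 ∪ V_1 ≠ ∅, then (V_1, V_0) is a crown in G: V_0 is independent, N(V_0) = V_1, and there exists a matching between V_1 and V_0 saturating V_1. -/

import Mathlib

/-- A matching in a simple graph `G`, given as a finite set of edges of `G`
that are pairwise vertex-disjoint. -/
def IsMatching {V : Type*} (G : SimpleGraph V) (M : Finset (Sym2 V)) : Prop :=
  (∀ e ∈ M, e ∈ G.edgeSet) ∧
    ∀ e ∈ M, ∀ f ∈ M, e ≠ f → ∀ v, v ∈ e → v ∉ f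

/-- A feasible solution of the LP relaxation of vertex cover. -/
def LPFeasible {V : Type*} (G : SimpleGraph V) (x : V → ℝ) : Prop :=
  (∀ v, 0 ≤ x v ∧ x v ≤ 1) ∧ ∀ ⦃u v⦄, G.Adj u v → 1 ≤ x u + x v

/-- An optimal solution of the vertex cover LP: feasible and of minimum value. -/
def LPOptimal {V : Type*} [Fintype V] (G : SimpleGraph V) (x : V → ℝ) : Prop :=
  LPFeasible G x ∧ ∀ y : V → ℝ, LPFeasible G y → ∑ v, x v ≤ ∑ v, y v

/-- Let `x` be an optimal half-integral solution of the vertex cover LP,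
`V₁ = {v | x v = 1}` and `V₀ = {v | x v = 0}`. If `V₀ ∪ V₁ ≠ ∅`, then `(V₁, V₀)` is
a crown: `V₀` is independent, `N(V₀) = V₁`, and there is a matching between `V₁`
and `V₀` saturating `V₁`. -/
theorem stmt5 {V : Type*} [Fintype V] [DecidableEq V] (G : SimpleGraph V)
    (x : V → ℝ) (hopt : LPOptimal G x)
    (hvals : ∀ v, x v = 0 ∨ x v = 1 / 2 ∨ x v = 1)
    (hne : ∃ v, x v = 0 ∨ x v = 1) :
    (∀ a, x a = 0 → ∀ b, x b = 0 → ¬ G.Adj a b) ∧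
    ({b | ∃ a, x a = 0 ∧ G.Adj a b} = {v | x v = 1}) ∧
    ∃ M : Finset (Sym2 V), IsMatching G M ∧
      (∀ e ∈ M, ∃ a, x a = 1 ∧ ∃ b, x b = 0 ∧ e = s(a, b)) ∧
      ∀ a, x a = 1 → ∃ e ∈ M, a ∈ e := by
  classical
  obtain ⟨⟨hbd, hedge⟩, hmin⟩ := hopt
  have h1 : ∀ a, x a = 0 → ∀ b, x b = 0 → ¬ G.Adj a b := by
    intro a ha b hb hadj
    have h := hedge hadj
    rw [ha, hb] at h; linarith
  have half_le : ∀ v, x v ≠ 0 → (1/2 : ℝ) ≤ x v := by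
    intro v hv
    rcases hvals v with h | h | h
    · exact absurd h hv
    · rw [h]
    · rw [h]; norm_num
  have h2a : ∀ a, x a = 0 → ∀ b, G.Adj a b → x b = 1 := by
    intro a ha b hadj
    have h := hedge hadj
    rw [ha] at h
    have := (hbd b).2
    linarith
  have h2b : ∀ v, x v = 1 → ∃ a, x a = 0 ∧ G.Adj a v := by
    intro v hv
    by_contra hc
    push_neg at hc
    set y : V → ℝ := fun u => if u = v then (1/2 : ℝ) else x u with hy
    have hfeas : LPFeasible G y := by
      constructor
      · intro u
        simp only [hy]
        split
        · norm_num
        · exact hbd u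
      · intro u w hadj
        simp only [hy]
        split
        · next h =>
          subst h
          have hw : w ≠ u := (G.ne_of_adj hadj).symm
          rw [if_neg hw]
          have hxw : x w ≠ 0 := fun h0 => hc w h0 (hadj.symm)
          have := half_le w hxw
          linarith
        · next h =>
          split
          · next h2 =>
            subst h2
            have hxu : x u ≠ 0 := fun h0 => hc u h0 hadj
            have := half_le u hxu
            linarith
          · exact hedge hadj
    have hsum : ∑ u, y u = (∑ u, x u) - 1/2 := by
      have : ∀ u, y u = x u + (if u = v then (1/2 : ℝ) - x u else 0) := by
        intro u
        simp only [hy]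
        split <;> simp_all
      rw [Finset.sum_congr rfl (fun u _ => this u), Finset.sum_add_distrib,
        Finset.sum_ite_eq' Finset.univ v (fun u => (1/2 : ℝ) - x u)]
      rw [if_pos (Finset.mem_univ v), hv]; ring
    have := hmin y hfeas
    rw [hsum] at this
    linarith
  have h2 : {b | ∃ a, x a = 0 ∧ G.Adj a b} = {v | x v = 1} := by
    ext b
    constructor
    · rintro ⟨a, ha, hadj⟩
      exact h2a a ha b hadj
    · intro hb
      exact h2b b hb
  refine ⟨h1, h2, ?_⟩
  -- Hall's theorem setup
  set t : {v // x v = 1} → Finset V :=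
    fun a => Finset.univ.filter (fun b => x b = 0 ∧ G.Adj a.1 b) with ht
  have hmem_t : ∀ a b, b ∈ t a ↔ x b = 0 ∧ G.Adj a.1 b := by
    intro a b; simp [ht]
  have hall : ∀ A : Finset {v // x v = 1}, A.card ≤ (A.biUnion t).card := by
    intro A
    by_contra hlt
    push_neg at hlt
    set W : Finset V := A.image Subtype.val with hW
    set B : Finset V := A.biUnion t with hB
    have hWcard : W.card = A.card := Finset.card_image_of_injective A Subtype.val_injective
    have hWx : ∀ u ∈ W, x u = 1 := by
      intro u hu
      rw [hW, Finset.mem_image] at hu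
      obtain ⟨a, _, rfl⟩ := hu
      exact a.2
    have hBx : ∀ u ∈ B, x u = 0 := by
      intro u hu
      rw [hB, Finset.mem_biUnion] at hu
      obtain ⟨a, _, hu⟩ := hu
      exact ((hmem_t a u).1 hu).1
    have hdisj : Disjoint W B := by
      rw [Finset.disjoint_left]
      intro u hu hu'
      have := hWx u hu
      have := hBx u hu'
      linarith
    set y : V → ℝ := fun u => if u ∈ W ∪ B then (1/2 : ℝ) else x u with hy
    have hkey : ∀ u w, G.Adj u w → u ∈ W ∪ B → w ∉ W ∪ B → (1/2 : ℝ) ≤ x w := by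
      intro u w hadj hu hw
      by_contra hc
      push_neg at hc
      have hxw0 : x w = 0 := by
        rcases hvals w with h | h | h
        · exact h
        · rw [h] at hc; linarith
        · rw [h] at hc; linarith
      rw [Finset.mem_union] at hu
      rcases hu with hu | hu
      · -- u ∈ W : then w should be in B
        rw [hW, Finset.mem_image] at hu
        obtain ⟨a, haA, rfl⟩ := hu
        have : w ∈ B := by
          rw [hB, Finset.mem_biUnion]
          exact ⟨a, haA, (hmem_t a w).2 ⟨hxw0, hadj⟩⟩
        exact hw (Finset.mem_union_right _ this)
      · -- u ∈ B : both zero, contradiction with independence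
        exact h1 u (hBx u hu) w hxw0 hadj
    have hfeas : LPFeasible G y := by
      constructor
      · intro u
        simp only [hy]
        split
        · norm_num
        · exact hbd u
      · intro u w hadj
        simp only [hy]
        split
        · next hu =>
          split
          · norm_num
          · next hw =>
            have := hkey u w hadj hu hw
            linarith
        · next hu =>
          split
          · next hw =>
            have := hkey w u hadj.symm hw hu
            linarith
          · exact hedge hadj
    have hsum : ∑ u, y u = (∑ u, x u) + ∑ u ∈ W ∪ B, ((1/2 : ℝ) - x u) := by
      have : ∀ u, y u = x u + (if u ∈ W ∪ B then (1/2 : ℝ) - x u else 0) := by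
        intro u
        simp only [hy]
        split <;> ring
      rw [Finset.sum_congr rfl (fun u _ => this u), Finset.sum_add_distrib,
        Finset.sum_ite_mem, Finset.univ_inter]
    have hsplit : ∑ u ∈ W ∪ B, ((1/2 : ℝ) - x u)
        = (∑ u ∈ W, ((1/2 : ℝ) - x u)) + ∑ u ∈ B, ((1/2 : ℝ) - x u) :=
      Finset.sum_union hdisj
    have hWsum : ∑ u ∈ W, ((1/2 : ℝ) - x u) = -(W.card / 2 : ℝ) := by
      rw [Finset.sum_congr rfl (fun u hu => by rw [hWx u hu])]
      simp [Finset.sum_const]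
      ring
    have hBsum : ∑ u ∈ B, ((1/2 : ℝ) - x u) = (B.card / 2 : ℝ) := by
      rw [Finset.sum_congr rfl (fun u hu => by rw [hBx u hu])]
      simp [Finset.sum_const]
      ring
    have hmin' := hmin y hfeas
    rw [hsum, hsplit, hWsum, hBsum] at hmin'
    have hcard : (B.card : ℝ) < W.card := by
      rw [hWcard]
      exact_mod_cast hlt
    linarith
  obtain ⟨f, hfinj, hft⟩ := (Finset.all_card_le_biUnion_card_iff_exists_injective t).1 hall
  have hf0 : ∀ a, x (f a) = 0 := fun a => ((hmem_t a (f a)).1 (hft a)).1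
  have hfadj : ∀ a, G.Adj a.1 (f a) := fun a => ((hmem_t a (f a)).1 (hft a)).2
  refine ⟨Finset.image (fun a : {v // x v = 1} => s(a.1, f a)) Finset.univ, ⟨?_, ?_⟩, ?_, ?_⟩
  · intro e he
    rw [Finset.mem_image] at he
    obtain ⟨a, _, rfl⟩ := he
    exact hfadj a
  · intro e he e' he' hne' v hv hv'
    rw [Finset.mem_image] at he he'
    obtain ⟨a, _, rfl⟩ := he
    obtain ⟨b, _, rfl⟩ := he'
    have hab : a ≠ b := fun h => hne' (by rw [h])
    rw [Sym2.mem_iff] at hv hv'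
    rcases hv with rfl | rfl <;> rcases hv' with h | h
    · exact hab (Subtype.ext h)
    · have := a.2
      rw [h, hf0 b] at this
      norm_num at this
    · have := b.2
      rw [← h, hf0 a] at this
      norm_num at this
    · exact hab (hfinj h)
  · intro e he
    rw [Finset.mem_image] at he
    obtain ⟨a, _, rfl⟩ := he
    exact ⟨a.1, a.2, f a, hf0 a, rfl⟩
  · intro a ha
    exact ⟨s(a, f ⟨a, ha⟩), Finset.mem_image_of_mem _ (Finset.mem_univ (⟨a, ha⟩ : {v // x v = 1})),
      Sym2.mem_mk_left _ _⟩
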